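/- Let G be a connected Eulerian digraph and x a chip-distribution on G. Then x is non-terminating if and only if there exists a recurrent chip-distribution y with x ~ y. -/

import Mathlib

namespace ChipFiring

variable {V : Type*}

/-- Out-degree of a vertex: total multiplicity of edges leaving `v`. -/
def outdeg [Fintype V] (d : V → V → ℕ) (v : V) : ℕ := ∑ u, d v u

/-- In-degree of a vertex: total multiplicity of edges entering `v`. -/
def indeg [Fintype V] (d : V → V → ℕ) (v : V) : ℕ := ∑ u, d u v

/-- A digraph (multiplicity function) has no loops. -/
def Loopless (d : V → V → ℕ) : Prop := ∀ v, d v v = 0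

/-- Weak connectivity: each pair of vertices is joined by an undirected walk. -/
def WeaklyConnected (d : V → V → ℕ) : Prop :=
  ∀ u v : V, Relation.ReflTransGen (fun a b => d a b ≠ 0 ∨ d b a ≠ 0) u v

/-- Strong connectivity: each ordered pair of vertices is joined by a directed walk. -/
def StronglyConnected (d : V → V → ℕ) : Prop :=
  ∀ u v : V, Relation.ReflTransGen (fun a b => d a b ≠ 0) u v

/-- Eulerian: out-degree equals in-degree at each vertex. -/
def Eulerian [Fintype V] (d : V → V → ℕ) : Prop := ∀ v, outdeg d v = indeg d v

/-- The Laplacian matrix: `L(u,u) = -d⁺(u)`, and `L(u,v) = d(v,u)` for `u ≠ v`. -/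
def laplacian [Fintype V] [DecidableEq V] (d : V → V → ℕ) : Matrix V V ℤ :=
  fun u v => if u = v then -(outdeg d v : ℤ) else (d v u : ℤ)

/-- Firing vertex `v`: `v` sends one chip along each outgoing edge. -/
def fire [Fintype V] [DecidableEq V] (d : V → V → ℕ) (x : V → ℕ) (v : V) : V → ℕ :=
  fun u => if u = v then x v - outdeg d v else x u + d v u

/-- `LegalSeq d x α` : the sequence of firings `α` is legal from initial distribution `x`. -/
def LegalSeq [Fintype V] [DecidableEq V] (d : V → V → ℕ) : (V → ℕ) → List V → Prop
  | _, [] => True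
  | x, v :: rest => outdeg d v ≤ x v ∧ LegalSeq d (fire d x v) rest

/-- The chip-distribution obtained from `x` after performing the firings `α`. -/
def runGame [Fintype V] [DecidableEq V] (d : V → V → ℕ) : (V → ℕ) → List V → (V → ℕ)
  | x, [] => x
  | x, v :: rest => runGame d (fire d x v) rest

/-- The firing vector of a game: how many times each vertex is fired. -/
def firingVector [DecidableEq V] (α : List V) : V → ℕ := fun v => α.count v

/-- `x ⤳ y` : some legal game transforms `x` into `y`. -/
def Reaches [Fintype V] [DecidableEq V] (d : V → V → ℕ) (x y : V → ℕ) : Prop :=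
  ∃ α : List V, LegalSeq d x α ∧ runGame d x α = y

/-- A period vector: a nonnegative integer vector in the kernel of the Laplacian. -/
def PeriodVector [Fintype V] [DecidableEq V] (d : V → V → ℕ) (p : V → ℕ) : Prop :=
  (laplacian d).mulVec (fun v => (p v : ℤ)) = 0

/-- A vector `f ∈ ℕ^V` is reduced if `f ≥ p` fails for every nonzero period vector `p`. -/
def Reduced [Fintype V] [DecidableEq V] (d : V → V → ℕ) (f : V → ℕ) : Prop :=
  ∀ p : V → ℕ, PeriodVector d p → p ≠ 0 → ¬ (∀ v, p v ≤ f v)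

/-- A distribution is recurrent if a nonempty legal game transforms it back to itself. -/
def Recurrent [Fintype V] [DecidableEq V] (d : V → V → ℕ) (x : V → ℕ) : Prop :=
  ∃ α : List V, α ≠ [] ∧ LegalSeq d x α ∧ runGame d x α = x

/-- Linear equivalence: `x = y + Lz` for some integer vector `z`. -/
def LinEquiv [Fintype V] [DecidableEq V] (d : V → V → ℕ) (x y : V → ℕ) : Prop :=
  ∃ z : V → ℤ, ∀ v, (x v : ℤ) = (y v : ℤ) + (laplacian d).mulVec z v

/-- `x` is non-terminating: there is an infinite sequence of legal firings from `x`. -/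
def NonTerminating [Fintype V] [DecidableEq V] (d : V → V → ℕ) (x : V → ℕ) : Prop :=
  ∃ s : ℕ → V, ∀ n : ℕ, LegalSeq d x (List.ofFn (fun i : Fin n => s i))

end ChipFiring

set_option linter.unusedSectionVars false

namespace ChipFiring
variable {V : Type*} [Fintype V] [DecidableEq V] {d : V → V → ℕ}

lemma legalSeq_nil (x : V → ℕ) : LegalSeq d x [] := trivial

lemma legalSeq_cons {x : V → ℕ} {v : V} {rest : List V} :
    LegalSeq d x (v :: rest) ↔ outdeg d v ≤ x v ∧ LegalSeq d (fire d x v) rest := Iff.rfl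

lemma runGame_nil (x : V → ℕ) : runGame d x [] = x := rfl

lemma runGame_cons (x : V → ℕ) (v : V) (rest : List V) :
    runGame d x (v :: rest) = runGame d (fire d x v) rest := rfl

lemma legalSeq_append {α β : List V} : ∀ {x : V → ℕ},
    LegalSeq d x (α ++ β) ↔ LegalSeq d x α ∧ LegalSeq d (runGame d x α) β := by
  induction α with
  | nil => intro x; simp [legalSeq_nil, runGame_nil]
  | cons v rest ih =>
    intro x
    rw [List.cons_append, legalSeq_cons, legalSeq_cons, runGame_cons, ih, and_assoc]

lemma runGame_append {α β : List V} : ∀ {x : V → ℕ},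
    runGame d x (α ++ β) = runGame d (runGame d x α) β := by
  induction α with
  | nil => intro x; rfl
  | cons v rest ih => intro x; rw [List.cons_append, runGame_cons, ih, runGame_cons]

lemma fire_cast {x : V → ℕ} {a : V} (h : outdeg d a ≤ x a) (v : V) :
    ((fire d x a v : ℕ) : ℤ) = (x v : ℤ) + laplacian d v a := by
  unfold fire laplacian
  by_cases hv : v = a
  · subst hv; simp [Nat.cast_sub h, sub_eq_add_neg]
  · simp [hv]

lemma mulVec_apply (M : Matrix V V ℤ) (z : V → ℤ) (v : V) :
    M.mulVec z v = ∑ u, M v u * z u := rfl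

lemma runGame_cast : ∀ (α : List V) (x : V → ℕ), LegalSeq d x α → ∀ v,
    ((runGame d x α v : ℕ) : ℤ) = (x v : ℤ)
      + (laplacian d).mulVec (fun u => (firingVector α u : ℤ)) v := by
  intro α
  induction α with
  | nil =>
    intro x _ v
    simp [runGame_nil, mulVec_apply, firingVector]
  | cons a rest ih =>
    intro x hx v
    rw [legalSeq_cons] at hx
    rw [runGame_cons, ih _ hx.2 v, fire_cast hx.1 v]
    have hcnt : ∀ u, ((firingVector (a :: rest) u : ℕ) : ℤ)
        = (firingVector rest u : ℤ) + (if u = a then 1 else 0) := by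
      intro u
      by_cases h : u = a <;> simp [firingVector, List.count_cons, h] <;> exact Ne.symm h
    rw [mulVec_apply, mulVec_apply]
    have key : ∀ u, laplacian d v u * ((firingVector (a :: rest) u : ℕ) : ℤ)
        = laplacian d v u * (firingVector rest u : ℤ)
          + (if u = a then laplacian d v u else 0) := by
      intro u
      rw [hcnt u, mul_add, mul_ite, mul_one, mul_zero]
    simp only [key, Finset.sum_add_distrib, Finset.sum_ite_eq' Finset.univ a,
      Finset.mem_univ, if_true]
    ring

end ChipFiring
namespace ChipFiring
variable {V : Type*} [Fintype V] [DecidableEq V] {d : V → V → ℕ}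

lemma rowsum_zero (hloop : Loopless d) (heul : Eulerian d) (v : V) :
    ∑ u, laplacian d v u = 0 := by
  have h : ∀ u, laplacian d v u = (if v = u then -(outdeg d v : ℤ) else 0) + (d u v : ℤ) := by
    intro u
    unfold laplacian
    by_cases hv : v = u
    · subst hv; simp [hloop v]
    · simp [hv]
  simp only [h, Finset.sum_add_distrib, Finset.sum_ite_eq, Finset.mem_univ, if_true]
  have : ∑ u, (d u v : ℤ) = (indeg d v : ℤ) := by
    unfold indeg; push_cast; ring
  rw [this, ← heul v]
  ring

lemma colsum_zero (hloop : Loopless d) (u : V) :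
    ∑ v, laplacian d v u = 0 := by
  have h : ∀ v, laplacian d v u = (if u = v then -(outdeg d u : ℤ) else 0) + (d u v : ℤ) := by
    intro v
    unfold laplacian
    by_cases hv : v = u
    · subst hv; simp [hloop v]
    · simp [hv, Ne.symm hv]
  simp only [h, Finset.sum_add_distrib, Finset.sum_ite_eq, Finset.mem_univ, if_true]
  have : ∑ v, (d u v : ℤ) = (outdeg d u : ℤ) := by
    unfold outdeg; push_cast; ring
  rw [this]
  ring

/-- A nonzero period vector on a connected Eulerian digraph has full support. -/
lemma period_pos (hloop : Loopless d) (hconn : WeaklyConnected d) (heul : Eulerian d)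
    {f : V → ℕ} (hf : PeriodVector d f) (hne : f ≠ 0) : ∀ v, 1 ≤ f v := by
  -- incoming closure
  have hin : ∀ v, f v = 0 → ∀ u, d u v ≠ 0 → f u = 0 := by
    intro v hv u hdu
    have h0 : (laplacian d).mulVec (fun w => (f w : ℤ)) v = 0 := by
      have := congrFun hf v; exact this
    rw [mulVec_apply] at h0
    have hsplit : ∀ w, laplacian d v w * (f w : ℤ)
        = (if v = w then -(outdeg d v : ℤ) * (f w : ℤ) else 0) + (d w v : ℤ) * (f w : ℤ) := by
      intro w
      unfold laplacian
      by_cases hw : v = w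
      · subst hw; simp [hloop v]
      · simp [hw]
    rw [Finset.sum_congr rfl (fun w _ => hsplit w)] at h0
    simp only [Finset.sum_add_distrib, Finset.sum_ite_eq, Finset.mem_univ, if_true, hv,
      Nat.cast_zero, mul_zero, zero_add] at h0
    have hterm : ∀ w ∈ Finset.univ, (0 : ℤ) ≤ (d w v : ℤ) * (f w : ℤ) := by
      intro w _; positivity
    have := (Finset.sum_eq_zero_iff_of_nonneg hterm).1 h0 u (Finset.mem_univ u)
    rcases mul_eq_zero.1 this with h | h
    · exact absurd (Nat.cast_injective h) hdu
    · exact Nat.cast_injective h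
  -- outgoing closure (uses Eulerian)
  have hout : ∀ v, f v = 0 → ∀ u, d v u ≠ 0 → f u = 0 := by
    intro v hv u hdu
    by_contra hu
    -- Z = vertices with f = 0
    classical
    have hsum : ∑ a ∈ Finset.univ.filter (fun w => f w = 0), outdeg d a
        = ∑ a ∈ Finset.univ.filter (fun w => f w = 0), indeg d a :=
      Finset.sum_congr rfl (fun a _ => heul a)
    -- expand
    have hO : ∑ a ∈ Finset.univ.filter (fun w => f w = 0), outdeg d a
        = (∑ a ∈ Finset.univ.filter (fun w => f w = 0),
            ∑ b ∈ Finset.univ.filter (fun w => f w = 0), d a b)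
          + ∑ a ∈ Finset.univ.filter (fun w => f w = 0),
              ∑ b ∈ Finset.univ.filter (fun w => ¬ f w = 0), d a b := by
      rw [← Finset.sum_add_distrib]
      refine Finset.sum_congr rfl (fun a _ => ?_)
      unfold outdeg
      rw [← Finset.sum_filter_add_sum_filter_not Finset.univ (fun w => f w = 0) (fun b => d a b)]
    have hI : ∑ a ∈ Finset.univ.filter (fun w => f w = 0), indeg d a
        = (∑ a ∈ Finset.univ.filter (fun w => f w = 0),
            ∑ b ∈ Finset.univ.filter (fun w => f w = 0), d b a)
          + ∑ a ∈ Finset.univ.filter (fun w => f w = 0),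
              ∑ b ∈ Finset.univ.filter (fun w => ¬ f w = 0), d b a := by
      rw [← Finset.sum_add_distrib]
      refine Finset.sum_congr rfl (fun a _ => ?_)
      unfold indeg
      rw [← Finset.sum_filter_add_sum_filter_not Finset.univ (fun w => f w = 0) (fun b => d b a)]
    have hIn0 : ∑ a ∈ Finset.univ.filter (fun w => f w = 0),
        ∑ b ∈ Finset.univ.filter (fun w => ¬ f w = 0), d b a = 0 := by
      refine Finset.sum_eq_zero (fun a ha => Finset.sum_eq_zero (fun b hb => ?_))
      rw [Finset.mem_filter] at ha hb
      by_contra hd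
      exact hb.2 (hin a ha.2 b hd)
    have hswap : ∑ a ∈ Finset.univ.filter (fun w => f w = 0),
          ∑ b ∈ Finset.univ.filter (fun w => f w = 0), d a b
        = ∑ a ∈ Finset.univ.filter (fun w => f w = 0),
          ∑ b ∈ Finset.univ.filter (fun w => f w = 0), d b a := Finset.sum_comm
    have hOut0 : ∑ a ∈ Finset.univ.filter (fun w => f w = 0),
        ∑ b ∈ Finset.univ.filter (fun w => ¬ f w = 0), d a b = 0 := by
      rw [hO, hI, hswap, hIn0] at hsum; omega
    have hv' : v ∈ Finset.univ.filter (fun w => f w = 0) := by simp [hv]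
    have hu' : u ∈ Finset.univ.filter (fun w => ¬ f w = 0) := by simp [hu]
    have h1 := (Finset.sum_eq_zero_iff.1 hOut0) v hv'
    have h2 := (Finset.sum_eq_zero_iff.1 h1) u hu'
    exact hdu h2
  -- propagation along undirected paths
  intro v
  rcases Nat.eq_zero_or_pos (f v) with h0 | h
  · exfalso
    apply hne
    funext u
    have hpath := hconn v u
    induction hpath with
    | refl => exact h0
    | tail _ hrel ih => rcases hrel with h | h
                        · exact hout _ ih _ h
                        · exact hin _ ih _ h
  · exact h

end ChipFiring
namespace ChipFiring
variable {V : Type*} [Fintype V] [DecidableEq V] {d : V → V → ℕ}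

/-- Least-action-style bound: if `c = y + Lw` is everywhere below out-degrees,
then any legal game from `y` fires each vertex at most `w` times. -/
lemma lap_bound {y c : V → ℕ} {w : V → ℤ}
    (hw0 : ∀ v, 0 ≤ w v)
    (hc : ∀ v, (c v : ℤ) = (y v : ℤ) + (laplacian d).mulVec w v)
    (hstab : ∀ v, c v < outdeg d v) :
    ∀ α : List V, LegalSeq d y α → ∀ v, (firingVector α v : ℤ) ≤ w v := by
  intro α
  induction α using List.reverseRecOn with
  | nil => intro _ v; simpa [firingVector] using hw0 v
  | append_singleton ρ a ih =>
    intro hleg v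
    have hsplit := legalSeq_append.1 hleg
    have hρ := hsplit.1
    have ha : outdeg d a ≤ runGame d y ρ a := (legalSeq_cons.1 hsplit.2).1
    have hcnt : ∀ u, firingVector (ρ ++ [a]) u
        = firingVector ρ u + (if u = a then 1 else 0) := by
      intro u
      by_cases h : u = a <;> simp [firingVector, List.count_append, h] <;>
        exact List.count_eq_zero.2 (by simpa using h)
    have hih := ih hρ
    by_cases hva : v = a
    · subst hva
      rw [hcnt v, if_pos rfl]
      push_cast
      -- need firingVector ρ v + 1 ≤ w v, i.e. firingVector ρ v < w v
      by_contra hlt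
      push_neg at hlt
      have heq : (firingVector ρ v : ℤ) = w v := le_antisymm (hih v) (by linarith)
      -- compute the chips at v after ρ
      have hrun := runGame_cast ρ y hρ v
      have hle : ((runGame d y ρ v : ℕ) : ℤ) ≤ (c v : ℤ) := by
        rw [hrun, hc v, mulVec_apply, mulVec_apply]
        have : ∀ u ∈ Finset.univ,
            laplacian d v u * (firingVector ρ u : ℤ) ≤ laplacian d v u * w u := by
          intro u _
          by_cases hu : u = v
          · subst hu; rw [heq]
          · have hpos : 0 ≤ laplacian d v u := by
              unfold laplacian
              rw [if_neg (fun h => hu h.symm)]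
              positivity
            exact mul_le_mul_of_nonneg_left (hih u) hpos
        have := Finset.sum_le_sum this
        linarith
      have h1 : (outdeg d v : ℤ) ≤ (c v : ℤ) := le_trans (by exact_mod_cast ha) hle
      have h2 := hstab v
      omega
    · rw [hcnt v, if_neg hva]
      simpa using hih v

/-- Repeating a recurrent cycle `M` times. -/
lemma cycle_pow {y : V → ℕ} {β : List V} (hβ : LegalSeq d y β) (hrun : runGame d y β = y) :
    ∀ M : ℕ, ∃ γ : List V, LegalSeq d y γ ∧ runGame d y γ = y ∧
      ∀ v, firingVector γ v = M * firingVector β v := by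
  intro M
  induction M with
  | zero => exact ⟨[], legalSeq_nil y, rfl, fun v => by simp [firingVector]⟩
  | succ M ihM =>
    obtain ⟨γ, hγ, hγrun, hγcnt⟩ := ihM
    refine ⟨β ++ γ, ?_, ?_, ?_⟩
    · rw [legalSeq_append, hrun]; exact ⟨hβ, hγ⟩
    · rw [runGame_append, hrun, hγrun]
    · intro v
      simp [firingVector, List.count_append] at *
      rw [hγcnt v]
      ring

end ChipFiring
namespace ChipFiring
variable {V : Type*} [Fintype V] [DecidableEq V] {d : V → V → ℕ}

lemma reaches_self (x : V → ℕ) : Reaches d x x := ⟨[], legalSeq_nil x, rfl⟩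

lemma reaches_fire {x c : V → ℕ} {v : V} (h : Reaches d x c) (hv : outdeg d v ≤ c v) :
    Reaches d x (fire d c v) := by
  obtain ⟨δ, hδ, hrun⟩ := h
  refine ⟨δ ++ [v], ?_, ?_⟩
  · rw [legalSeq_append, hrun]; exact ⟨hδ, hv, trivial⟩
  · rw [runGame_append, hrun]; rfl

lemma nt_of_no_stuck {x : V → ℕ} (H : ∀ c, Reaches d x c → ∃ v, outdeg d v ≤ c v) :
    NonTerminating d x := by
  classical
  choose pick hpick using H
  let step : {c : V → ℕ // Reaches d x c} → {c : V → ℕ // Reaches d x c} :=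
    fun p => ⟨fire d p.1 (pick p.1 p.2), reaches_fire p.2 (hpick p.1 p.2)⟩
  let seq : ℕ → {c : V → ℕ // Reaches d x c} := fun n => step^[n] ⟨x, reaches_self x⟩
  let s : ℕ → V := fun n => pick (seq n).1 (seq n).2
  have hstep : ∀ n, seq (n+1) = step (seq n) := fun n => Function.iterate_succ_apply' step n _
  have key : ∀ n, LegalSeq d x (List.ofFn fun i : Fin n => s i) ∧
      runGame d x (List.ofFn fun i : Fin n => s i) = (seq n).1 := by
    intro n
    induction n with
    | zero => exact ⟨trivial, rfl⟩
    | succ n ih =>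
      have hofn : (List.ofFn fun i : Fin (n+1) => s i)
          = (List.ofFn fun i : Fin n => s i) ++ [s n] := by
        rw [List.ofFn_succ']
        simp [List.concat_eq_append]
      constructor
      · rw [hofn, legalSeq_append, ih.2]
        exact ⟨ih.1, hpick _ _, trivial⟩
      · rw [hofn, runGame_append, ih.2, hstep n]
        rfl
  exact ⟨s, fun n => (key n).1⟩

end ChipFiring
namespace ChipFiring

variable {V : Type*} [Fintype V] [DecidableEq V] {d : V → V → ℕ}

lemma sum_runGame (hloop : Loopless d) {x : V → ℕ} (α : List V) (hα : LegalSeq d x α) :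
    ∑ v, runGame d x α v = ∑ v, x v := by
  have h : ((∑ v, runGame d x α v : ℕ) : ℤ) = ((∑ v, x v : ℕ) : ℤ) := by
    push_cast
    rw [Finset.sum_congr rfl (fun v _ => runGame_cast α x hα v), Finset.sum_add_distrib]
    have hz : ∑ v, (laplacian d).mulVec (fun u => (firingVector α u : ℤ)) v = 0 := by
      simp only [mulVec_apply]
      rw [Finset.sum_comm]
      refine Finset.sum_eq_zero (fun u _ => ?_)
      rw [← Finset.sum_mul, colsum_zero hloop u, zero_mul]
    rw [hz, add_zero]
  exact_mod_cast h

lemma forward_key (hloop : Loopless d) {x : V → ℕ} {s : ℕ → V}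
    (hs : ∀ n : ℕ, LegalSeq d x (List.ofFn (fun i : Fin n => s i)))
    {m n : ℕ} (hlt : m < n)
    (heq : runGame d x (List.ofFn fun i : Fin m => s i)
         = runGame d x (List.ofFn fun i : Fin n => s i)) :
    ∃ y : V → ℕ, Recurrent d y ∧ LinEquiv d x y := by
  set A := (List.ofFn fun i : Fin n => s i) with hA
  set B := (List.ofFn fun i : Fin m => s i) with hB
  have hAlen : A.length = n := by simp [hA]
  have hBlen : B.length = m := by simp [hB]
  have htake : A.take m = B := by
    apply List.ext_getElem
    · simp [hA, hB]; omega
    · intro i h1 h2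
      simp [hA, hB, List.getElem_take]
  have hsplit : B ++ A.drop m = A := by rw [← htake, List.take_append_drop]
  have hlegA : LegalSeq d x A := hs n
  rw [← hsplit, legalSeq_append] at hlegA
  obtain ⟨hlegB, hlegseg⟩ := hlegA
  set y := runGame d x B with hy
  refine ⟨y, ⟨A.drop m, ?_, hlegseg, ?_⟩, ?_⟩
  · intro hnil
    have := congrArg List.length hnil
    simp [hAlen] at this
    omega
  · have h5 : runGame d x A = runGame d y (A.drop m) := by
      conv_lhs => rw [← hsplit]
      rw [runGame_append]
    rw [← h5, hy, ← heq]
  · refine ⟨fun u => -(firingVector B u : ℤ), fun v => ?_⟩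
    have hcast := runGame_cast B x hlegB v
    rw [mulVec_apply] at hcast ⊢
    have hneg : ∑ u, laplacian d v u * -(firingVector B u : ℤ)
        = -∑ u, laplacian d v u * (firingVector B u : ℤ) := by
      rw [← Finset.sum_neg_distrib]
      exact Finset.sum_congr rfl (fun u _ => by ring)
    rw [hneg]
    have : ((y v : ℕ) : ℤ) = (x v : ℤ) + ∑ u, laplacian d v u * (firingVector B u : ℤ) := hcast
    linarith

theorem nonTerminating_iff_exists_recurrent_linEquiv' (d : V → V → ℕ)
    (hloop : Loopless d) (hconn : WeaklyConnected d) (heul : Eulerian d) (x : V → ℕ) :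
    NonTerminating d x ↔ ∃ y : V → ℕ, Recurrent d y ∧ LinEquiv d x y := by
  constructor
  · rintro ⟨s, hs⟩
    obtain ⟨m, n, hmn, hpair⟩ : ∃ m n : ℕ, m ≠ n ∧
        runGame d x (List.ofFn fun i : Fin m => s i)
          = runGame d x (List.ofFn fun i : Fin n => s i) := by
      set N := ∑ v, x v with hN
      have hbound : ∀ k v, runGame d x (List.ofFn fun i : Fin k => s i) v < N + 1 := by
        intro k v
        have h1 : runGame d x (List.ofFn fun i : Fin k => s i) v
            ≤ ∑ u, runGame d x (List.ofFn fun i : Fin k => s i) u :=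
          Finset.single_le_sum (f := fun u => runGame d x (List.ofFn fun i : Fin k => s i) u)
            (fun u _ => Nat.zero_le _) (Finset.mem_univ v)
        rw [sum_runGame hloop _ (hs k)] at h1
        omega
      let F : ℕ → (V → Fin (N+1)) := fun k v =>
        ⟨runGame d x (List.ofFn fun i : Fin k => s i) v, hbound k v⟩
      obtain ⟨m, n, hmn, h⟩ := Finite.exists_ne_map_eq_of_infinite F
      exact ⟨m, n, hmn, funext fun v => congrArg Fin.val (congrFun h v)⟩
    rcases lt_or_gt_of_ne hmn with h | h
    · exact forward_key hloop hs h hpair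
    · exact forward_key hloop hs h hpair.symm
  · rintro ⟨y, ⟨β, hβne, hβleg, hβrun⟩, z, hz⟩
    set f := firingVector β with hfdef
    have hLf : PeriodVector d f := by
      funext v
      have h1 := runGame_cast β y hβleg v
      rw [hβrun, mulVec_apply] at h1
      show (laplacian d).mulVec (fun u => (f u : ℤ)) v = 0
      rw [mulVec_apply]
      linarith
    have hfne : f ≠ 0 := by
      intro h
      cases β with
      | nil => exact hβne rfl
      | cons a tail =>
        have h0 : f a = 0 := by rw [h]; rfl
        simp [hfdef, firingVector, List.count_cons] at h0
    have hfpos := period_pos hloop hconn heul hLf hfne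
    apply nt_of_no_stuck
    intro c hc
    by_contra hstuck
    push_neg at hstuck
    obtain ⟨δ, hδleg, hδrun⟩ := hc
    set z1 : V → ℤ := fun u => z u + (firingVector δ u : ℤ) with hz1
    set t : ℤ := ∑ u, |z1 u| with ht
    set w : V → ℤ := fun u => z1 u + t with hwdef
    have hw0 : ∀ v, 0 ≤ w v := by
      intro v
      have h1 : |z1 v| ≤ t := by
        rw [ht]
        exact Finset.single_le_sum (f := fun u => |z1 u|)
          (fun u _ => abs_nonneg _) (Finset.mem_univ v)
      have h2 := neg_abs_le (z1 v)
      simp only [hwdef]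
      linarith
    have hcw : ∀ v, (c v : ℤ) = (y v : ℤ) + (laplacian d).mulVec w v := by
      intro v
      have hδ := runGame_cast δ x hδleg v
      rw [hδrun] at hδ
      have hx := hz v
      rw [mulVec_apply] at hδ hx ⊢
      have hrow := rowsum_zero hloop heul v
      have hsum1 : ∑ u, laplacian d v u * w u
          = (∑ u, laplacian d v u * z u)
            + ∑ u, laplacian d v u * (firingVector δ u : ℤ) := by
        have hterm : ∀ u, laplacian d v u * w u
            = laplacian d v u * z u + laplacian d v u * (firingVector δ u : ℤ)
              + laplacian d v u * t := by
          intro u; simp only [hwdef, hz1]; ring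
        rw [Finset.sum_congr rfl (fun u _ => hterm u), Finset.sum_add_distrib,
          Finset.sum_add_distrib, ← Finset.sum_mul, hrow, zero_mul, add_zero]
      rw [hsum1]
      linarith
    have hbound := lap_bound hw0 hcw hstuck
    set v0 := β.head hβne with hv0
    obtain ⟨γ, hγleg, _, hγcnt⟩ := cycle_pow hβleg hβrun ((w v0).toNat + 1)
    have h1 := hbound γ hγleg v0
    rw [hγcnt v0] at h1
    push_cast at h1
    have h2 : (1 : ℤ) ≤ (f v0 : ℤ) := by exact_mod_cast hfpos v0
    have h3 : w v0 ≤ ((w v0).toNat : ℤ) := Int.self_le_toNat _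
    have h4 : (((w v0).toNat : ℤ) + 1) ≤ (((w v0).toNat : ℤ) + 1) * (f v0 : ℤ) :=
      le_mul_of_one_le_right (by positivity) h2
    linarith

end ChipFiring



namespace ChipFiring

/-- On a connected Eulerian digraph, a chip-distribution `x` is
non-terminating if and only if there is a recurrent chip-distribution `y` with `x ~ y`. -/
theorem nonTerminating_iff_exists_recurrent_linEquiv {V : Type*} [Fintype V]
    [DecidableEq V] (d : V → V → ℕ)
    (hloop : Loopless d) (hconn : WeaklyConnected d) (heul : Eulerian d) (x : V → ℕ) :
    NonTerminating d x ↔ ∃ y : V → ℕ, Recurrent d y ∧ LinEquiv d x y := by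
  exact nonTerminating_iff_exists_recurrent_linEquiv' d hloop hconn heul x

end ChipFiring
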